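/- arXiv:2401.10169 — 4 statements merged into one kernel-verified Lean document; each statement's English description precedes it below -/
import Mathlib

section
/- For all real x > 0 and all real v > −1/2, I_v(x) < (cosh x / Γ(v+1)) · (x/2)^v. -/
open Real Polynomial Polynomial.Chebyshev Finset

noncomputable def besselI (v x : ℝ) : ℝ :=
  ∑' m : ℕ, (1 / (m.factorial * Real.Gamma ((m : ℝ) + v + 1))) * (x / 2) ^ (2 * (m : ℝ) + v)

lemma gammaPos (v : ℝ) (hv : -1/2 < v) (m : ℕ) : 0 < Real.Gamma ((m : ℝ) + v + 1) := by
  apply Real.Gamma_pos_of_pos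
  have : (0:ℝ) ≤ m := Nat.cast_nonneg m
  nlinarith

lemma factIneq (v : ℝ) (hv : -1/2 < v) (m : ℕ) :
    ((2 * m).factorial : ℝ) * Real.Gamma (v + 1) ≤
      4 ^ m * m.factorial * Real.Gamma ((m : ℝ) + v + 1) := by
  induction m with
  | zero => simp
  | succ n ih =>
    have hg := gammaPos v hv n
    have hrec : Real.Gamma (((n+1 : ℕ) : ℝ) + v + 1) =
        ((n : ℝ) + v + 1) * Real.Gamma ((n : ℝ) + v + 1) := by
      have hne : (n : ℝ) + v + 1 ≠ 0 :=
        ne_of_gt (by have : (0:ℝ) ≤ (n:ℝ) := Nat.cast_nonneg n; linarith)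
      have : ((n+1 : ℕ) : ℝ) + v + 1 = ((n : ℝ) + v + 1) + 1 := by push_cast; ring
      rw [this, Real.Gamma_add_one hne]
    have hfact : ((2 * (n+1)).factorial : ℝ) =
        (2*n+2) * (2*n+1) * ((2*n).factorial : ℝ) := by
      have : 2 * (n+1) = (2*n+1) + 1 := by ring
      rw [this, Nat.factorial_succ, Nat.factorial_succ]
      push_cast; ring
    rw [hfact, hrec]
    have h1 : ((2*n:ℕ):ℝ)*0 ≤ 0 := by simp
    have hGv : 0 ≤ Real.Gamma (v+1) := by
      have := Real.Gamma_pos_of_pos (show (0:ℝ) < v + 1 by linarith)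
      linarith
    have key : ((2*n:ℝ)+2) * ((2*n:ℝ)+1) ≤ 4 * ((n:ℝ)+1) * ((n : ℝ) + v + 1) := by
      nlinarith [Nat.cast_nonneg (α := ℝ) n]
    have hfn : (0:ℝ) < 4 ^ n * n.factorial := by positivity
    calc ((2*n:ℝ)+2) * ((2*n:ℝ)+1) * ((2*n).factorial : ℝ) * Real.Gamma (v+1)
        = ((2*n:ℝ)+2) * ((2*n:ℝ)+1) * (((2*n).factorial : ℝ) * Real.Gamma (v+1)) := by ring
      _ ≤ ((2*n:ℝ)+2) * ((2*n:ℝ)+1) * (4 ^ n * n.factorial * Real.Gamma ((n : ℝ) + v + 1)) := by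
          apply mul_le_mul_of_nonneg_left ih
          nlinarith [Nat.cast_nonneg (α := ℝ) n]
      _ ≤ 4 * ((n:ℝ)+1) * ((n : ℝ) + v + 1) *
            (4 ^ n * n.factorial * Real.Gamma ((n : ℝ) + v + 1)) := by
          apply mul_le_mul_of_nonneg_right key
          positivity
      _ = 4 ^ (n+1) * ((n+1 : ℕ).factorial : ℝ) * (((n : ℝ) + v + 1) * Real.Gamma ((n : ℝ) + v + 1)) := by
          rw [Nat.factorial_succ]; push_cast; ring

theorem besselI_upper_bound (x v : ℝ) (hx : 0 < x) (hv : -1/2 < v) :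
    besselI v x < (Real.cosh x / Real.Gamma (v + 1)) * (x / 2) ^ v := by
  have hx2 : (0:ℝ) < x / 2 := by linarith
  have hGv : 0 < Real.Gamma (v + 1) := Real.Gamma_pos_of_pos (by linarith)
  set f : ℕ → ℝ := fun m =>
    (1 / (m.factorial * Real.Gamma ((m : ℝ) + v + 1))) * (x / 2) ^ (2 * (m : ℝ) + v) with hf
  set g : ℕ → ℝ := fun m =>
    (x ^ (2*m) / ((2*m).factorial : ℝ)) / Real.Gamma (v+1) * (x / 2) ^ v with hgdef
  have hgsum : Summable g := by
    apply Summable.mul_right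
    apply Summable.div_const
    exact (Real.hasSum_cosh x).summable
  have hgtsum : ∑' m, g m = (Real.cosh x / Real.Gamma (v + 1)) * (x / 2) ^ v := by
    rw [tsum_mul_right, tsum_div_const, (Real.hasSum_cosh x).tsum_eq]
  -- rewrite f m
  have hfeq : ∀ m : ℕ, f m =
      (x ^ (2*m) / (4^m * m.factorial * Real.Gamma ((m:ℝ) + v + 1))) * (x / 2) ^ v := by
    intro m
    have h1 : (x/2) ^ (2 * (m:ℝ) + v) = (x/2) ^ (2*m : ℕ) * (x/2) ^ v := by
      rw [← Real.rpow_natCast (x/2) (2*m), ← Real.rpow_add hx2]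
      push_cast; ring_nf
    have h2 : (x/2) ^ (2*m : ℕ) = x ^ (2*m) / 4 ^ m := by
      rw [div_pow, pow_mul, pow_mul]; norm_num
    simp only [hf, h1, h2]
    field_simp
  have hfpos : ∀ m : ℕ, 0 ≤ f m := by
    intro m
    rw [hfeq m]
    have := gammaPos v hv m
    positivity
  have hle : ∀ m : ℕ, f m ≤ g m := by
    intro m
    rw [hfeq m, hgdef]
    simp only [div_div]
    apply mul_le_mul_of_nonneg_right _ (Real.rpow_nonneg hx2.le v)
    exact div_le_div_of_nonneg_left (by positivity) (by positivity) (factIneq v hv m)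
  have hstrict : f 1 < g 1 := by
    rw [hfeq 1, hgdef]
    simp only [div_div]
    apply mul_lt_mul_of_pos_right _ (Real.rpow_pos_of_pos hx2 v)
    apply div_lt_div_of_pos_left (by positivity) (by positivity)
    have hrec : Real.Gamma ((1:ℕ) + v + 1) = (v+1) * Real.Gamma (v+1) := by
      have : ((1:ℕ):ℝ) + v + 1 = (v+1) + 1 := by push_cast; ring
      rw [this, Real.Gamma_add_one (by linarith)]
    rw [hrec]
    norm_num
    nlinarith
  calc besselI v x = ∑' m, f m := rfl
    _ < ∑' m, g m := Summable.tsum_lt_tsum_of_nonneg hfpos hle hstrict hgsum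
    _ = _ := hgtsum
end

section
/- For every natural number n and every real x > 0, I_{n+1}(x)/I_n(x) ≤ cosh(x) · x / (2(n+1)). -/
open Real Polynomial Polynomial.Chebyshev Finset

private noncomputable def bterm (n : ℕ) (x : ℝ) (m : ℕ) : ℝ :=
  (x / 2) ^ (2 * m + n) / ((m.factorial : ℝ) * (m + n).factorial)

private lemma besselI_nat_eq (n : ℕ) (x : ℝ) :
    besselI (n : ℝ) x = ∑' m : ℕ, bterm n x m := by
  unfold besselI bterm
  congr 1; funext m
  have h1 : (m : ℝ) + n + 1 = ((m + n : ℕ) : ℝ) + 1 := by push_cast; ring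
  have h2 : (2 * (m : ℝ) + n) = ((2 * m + n : ℕ) : ℝ) := by push_cast; ring
  rw [h1, Real.Gamma_nat_eq_factorial, h2, Real.rpow_natCast, one_div_mul_eq_div]

private lemma bterm_nonneg (n : ℕ) (x : ℝ) (hx : 0 < x) (m : ℕ) : 0 ≤ bterm n x m := by
  unfold bterm; positivity

private lemma bterm_summable (n : ℕ) (x : ℝ) (hx : 0 < x) : Summable (bterm n x) := by
  refine Summable.of_nonneg_of_le (bterm_nonneg n x hx) ?_
    ((Real.summable_pow_div_factorial ((x / 2) ^ 2)).mul_left ((x / 2) ^ n))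
  intro m
  have h : ((x / 2) ^ 2) ^ m * (x / 2) ^ n = (x / 2) ^ (2 * m + n) := by
    rw [pow_add, pow_mul]
  rw [mul_div_assoc', mul_comm ((x / 2) ^ n), h]
  unfold bterm
  gcongr
  exact le_mul_of_one_le_right (by positivity)
    (by exact_mod_cast Nat.one_le_iff_ne_zero.mpr (m + n).factorial_ne_zero)

theorem besselI_ratio_bound (n : ℕ) (x : ℝ) (hx : 0 < x) :
    besselI ((n : ℝ) + 1) x / besselI (n : ℝ) x ≤ Real.cosh x * x / (2 * ((n : ℝ) + 1)) := by
  have hcast : ((n : ℝ) + 1) = ((n + 1 : ℕ) : ℝ) := by push_cast; ring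
  set c : ℝ := x / (2 * ((n : ℝ) + 1)) with hc
  have hcpos : 0 < c := by positivity
  have hpos : 0 < besselI (n : ℝ) x := by
    rw [besselI_nat_eq]
    refine Summable.tsum_pos (bterm_summable n x hx) (bterm_nonneg n x hx) 0 ?_
    unfold bterm; positivity
  have hterm : ∀ m, bterm (n + 1) x m ≤ c * bterm n x m := by
    intro m
    have key : bterm (n + 1) x m = (x / 2) / ((m : ℝ) + n + 1) * bterm n x m := by
      unfold bterm
      have e1 : 2 * m + (n + 1) = (2 * m + n) + 1 := by ring
      have e2 : (m + (n + 1)).factorial = (m + n + 1) * (m + n).factorial := by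
        rw [show m + (n + 1) = (m + n) + 1 by ring, Nat.factorial_succ]
      have hm : (m.factorial : ℝ) ≠ 0 := Nat.cast_ne_zero.mpr m.factorial_ne_zero
      have hmn : ((m + n).factorial : ℝ) ≠ 0 := Nat.cast_ne_zero.mpr (m + n).factorial_ne_zero
      have hmn1 : ((m : ℝ) + n + 1) ≠ 0 := by positivity
      rw [e1, e2, pow_succ]
      push_cast
      field_simp
    have hceq : c = (x / 2) / ((n : ℝ) + 1) := hc.trans (div_div x 2 ((n : ℝ) + 1)).symm
    rw [key, hceq]
    apply mul_le_mul_of_nonneg_right _ (bterm_nonneg n x hx m)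
    gcongr
    linarith [Nat.cast_nonneg (α := ℝ) m]
  have hle : besselI ((n : ℝ) + 1) x ≤ c * besselI (n : ℝ) x := by
    rw [hcast, besselI_nat_eq, besselI_nat_eq, ← tsum_mul_left]
    exact Summable.tsum_le_tsum hterm (bterm_summable (n + 1) x hx)
      ((bterm_summable n x hx).mul_left c)
  rw [div_le_iff₀ hpos]
  calc besselI ((n : ℝ) + 1) x ≤ c * besselI (n : ℝ) x := hle
    _ ≤ Real.cosh x * (c * besselI (n : ℝ) x) :=
        le_mul_of_one_le_left (mul_pos hcpos hpos).le (Real.one_le_cosh x)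
    _ = Real.cosh x * x / (2 * ((n : ℝ) + 1)) * besselI (n : ℝ) x := by rw [hc]; ring
end

section
/- For every natural number N ≥ 1, the polynomial G_N(x) = I_{N+1}(1)·U_{N−1}(x) + I_N(1)·U_{N−2}(x) − I_N(1) + I_N(1)·T_N(x) satisfies (−1)^N · G_N(x) > 0 for all real x < −1. -/
open Real Polynomial Polynomial.Chebyshev Finset

/-- the terms of the series for `besselI n 1` -/
noncomputable def bTerm (n m : ℕ) : ℝ :=
  (1 / ((m.factorial : ℝ) * ((m + n).factorial : ℝ))) * (1 / 2 : ℝ) ^ (2 * m + n)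

lemma bTerm_pos (n m : ℕ) : 0 < bTerm n m := by
  unfold bTerm
  positivity

lemma bTerm_eq_div (n m : ℕ) :
    bTerm n m = (1 / 2 : ℝ) ^ (2 * m + n) / ((m.factorial : ℝ) * ((m + n).factorial : ℝ)) := by
  unfold bTerm; ring

lemma bTerm_le (n m : ℕ) : bTerm n m ≤ 1 / m.factorial := by
  rw [bTerm_eq_div]
  apply div_le_div₀ (by positivity) (pow_le_one₀ (by norm_num) (by norm_num))
    (by positivity)
  exact le_mul_of_one_le_right (by positivity)
    (by exact_mod_cast Nat.one_le_iff_ne_zero.mpr (Nat.factorial_ne_zero _))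

lemma bTerm_summable (n : ℕ) : Summable (bTerm n) := by
  apply Summable.of_nonneg_of_le (fun m => (bTerm_pos n m).le) (bTerm_le n)
  simpa using Real.summable_pow_div_factorial 1

lemma besselI_nat_one (n : ℕ) : besselI n 1 = ∑' m : ℕ, bTerm n m := by
  unfold besselI bTerm
  congr 1
  ext m
  have h1 : ((m : ℝ) + n + 1) = ((m + n : ℕ) : ℝ) + 1 := by push_cast; ring
  rw [h1, Real.Gamma_nat_eq_factorial]
  have h2 : (2 * (m : ℝ) + n) = ((2 * m + n : ℕ) : ℝ) := by push_cast; ring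
  rw [h2, Real.rpow_natCast]

lemma besselI_nat_pos (n : ℕ) : 0 < besselI n 1 := by
  rw [besselI_nat_one]
  exact Summable.tsum_pos (bTerm_summable n) (fun m => (bTerm_pos n m).le) 0 (bTerm_pos n 0)

lemma besselI_succ_le (n : ℕ) (hn : 1 ≤ n) : 4 * besselI ((n : ℝ) + 1) 1 ≤ besselI (n : ℝ) 1 := by
  have key : ∀ m : ℕ, 4 * bTerm (n + 1) m ≤ bTerm n m := by
    intro m
    have hc : (0 : ℝ) < (m : ℝ) + n + 1 := by positivity
    have h2 : (2 : ℝ) ≤ (m : ℝ) + n + 1 := by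
      have : 1 ≤ m + n := le_trans hn (Nat.le_add_left n m)
      have : (1 : ℝ) ≤ (m : ℝ) + n := by exact_mod_cast this
      linarith
    have e : bTerm (n + 1) m = bTerm n m * (1 / (2 * ((m : ℝ) + n + 1))) := by
      rw [bTerm_eq_div, bTerm_eq_div]
      have hfact : (((m + (n + 1)).factorial : ℕ) : ℝ) = ((m : ℝ) + n + 1) * (m + n).factorial := by
        rw [show m + (n + 1) = (m + n) + 1 by ring, Nat.factorial_succ]
        push_cast; ring
      have hpow : (1 / 2 : ℝ) ^ (2 * m + (n + 1)) = (1 / 2 : ℝ) ^ (2 * m + n) * (1 / 2) := by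
        rw [show 2 * m + (n + 1) = (2 * m + n) + 1 by ring, pow_succ]
      rw [hfact, hpow]
      have hm : (0 : ℝ) < (m.factorial : ℝ) := by positivity
      have hmn : (0 : ℝ) < ((m + n).factorial : ℝ) := by positivity
      field_simp
    rw [e]
    have hb := bTerm_pos n m
    rw [mul_one_div, ← mul_div_assoc, div_le_iff₀ (by positivity)]
    nlinarith
  have hcast : ((n : ℝ) + 1) = ((n + 1 : ℕ) : ℝ) := by push_cast; ring
  rw [hcast, besselI_nat_one, besselI_nat_one, ← tsum_mul_left]
  exact Summable.tsum_le_tsum key ((bTerm_summable (n + 1)).mul_left 4) (bTerm_summable n)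

/-- lower bound for (-1)^n U_n(x) when x ≤ -1 -/
lemma U_lower (x : ℝ) (hx : x ≤ -1) : ∀ n : ℕ,
    ((n : ℝ) + 1) ≤ (-1 : ℝ) ^ n * (Polynomial.Chebyshev.U ℝ (n : ℤ)).eval x ∧
    (-1 : ℝ) ^ n * (Polynomial.Chebyshev.U ℝ (n : ℤ)).eval x + 1 ≤
      (-1 : ℝ) ^ (n + 1) * (Polynomial.Chebyshev.U ℝ ((n : ℤ) + 1)).eval x := by
  intro n
  induction n with
  | zero =>
    constructor
    · norm_num [Polynomial.Chebyshev.U_zero]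
    · norm_num [Polynomial.Chebyshev.U_zero, Polynomial.Chebyshev.U_one]
      nlinarith
  | succ n ih =>
    obtain ⟨h1, h2⟩ := ih
    have e1 : ((n + 1 : ℕ) : ℤ) = (n : ℤ) + 1 := by push_cast; ring
    have e2 : ((n + 1 : ℕ) : ℤ) + 1 = (n : ℤ) + 2 := by push_cast; ring
    have heval : (Polynomial.Chebyshev.U ℝ ((n : ℤ) + 2)).eval x =
        2 * x * (Polynomial.Chebyshev.U ℝ ((n : ℤ) + 1)).eval x -
          (Polynomial.Chebyshev.U ℝ (n : ℤ)).eval x := by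
      rw [Polynomial.Chebyshev.U_add_two]; simp
    set w0 := (Polynomial.Chebyshev.U ℝ (n : ℤ)).eval x with hw0
    set w1 := (Polynomial.Chebyshev.U ℝ ((n : ℤ) + 1)).eval x with hw1
    have hq : ((n : ℝ) + 2) ≤ (-1 : ℝ) ^ (n + 1) * w1 := by linarith
    have hqpos : (0 : ℝ) < (-1 : ℝ) ^ (n + 1) * w1 := lt_of_lt_of_le (by positivity) hq
    constructor
    · push_cast
      linarith
    · push_cast
      rw [show (n : ℤ) + 1 + 1 = (n : ℤ) + 2 by ring, heval]
      have hp2 : (-1 : ℝ) ^ (n + 1 + 1) = (-1 : ℝ) ^ n := by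
        rw [pow_succ, pow_succ]; ring
      have hp1 : (-1 : ℝ) ^ (n + 1) = -(-1 : ℝ) ^ n := by rw [pow_succ]; ring
      rw [hp1, hp2]
      rw [hp1] at h2 hqpos
      have hmul : 2 * (-(-1 : ℝ) ^ n * w1) ≤ (-2 * x) * (-(-1 : ℝ) ^ n * w1) :=
        mul_le_mul_of_nonneg_right (by linarith) hqpos.le
      nlinarith [hmul, h2]

theorem G_sign (N : ℕ) (hN : 1 ≤ N) (x : ℝ) (hx : x < -1) :
    0 < (-1 : ℝ) ^ N *
      (besselI ((N : ℝ) + 1) 1 * (Polynomial.Chebyshev.U ℝ ((N : ℤ) - 1)).eval x +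
        besselI (N : ℝ) 1 * (Polynomial.Chebyshev.U ℝ ((N : ℤ) - 2)).eval x -
        besselI (N : ℝ) 1 + besselI (N : ℝ) 1 * (Polynomial.Chebyshev.T ℝ N).eval x) := by
  set a := besselI ((N : ℝ) + 1) 1 with ha
  set b := besselI (N : ℝ) 1 with hb
  have hbpos : 0 < b := besselI_nat_pos N
  have hab : 4 * a ≤ b := besselI_succ_le N hN
  have hapos : 0 < a := by
    have hc : ((N : ℝ) + 1) = ((N + 1 : ℕ) : ℝ) := by push_cast; ring
    rw [ha, hc]; exact besselI_nat_pos (N + 1)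
  have hU2 := Polynomial.Chebyshev.U_sub_two ℝ (N : ℤ)
  have hT := Polynomial.Chebyshev.T_eq_U_sub_X_mul_U ℝ (N : ℤ)
  have hsum : (Polynomial.Chebyshev.U ℝ ((N : ℤ) - 2)).eval x
      + (Polynomial.Chebyshev.T ℝ (N : ℤ)).eval x
      = x * (Polynomial.Chebyshev.U ℝ ((N : ℤ) - 1)).eval x := by
    rw [hU2, hT]; simp; ring
  set u := (Polynomial.Chebyshev.U ℝ ((N : ℤ) - 1)).eval x with hu
  obtain ⟨N', rfl⟩ : ∃ N', N = N' + 1 := ⟨N - 1, (Nat.succ_pred_eq_of_pos hN).symm⟩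
  have hidx : ((N' + 1 : ℕ) : ℤ) - 1 = (N' : ℤ) := by push_cast; ring
  have hUlow := (U_lower x hx.le N').1
  rw [← hidx] at hUlow
  rw [← hu] at hUlow
  set v := (-1 : ℝ) ^ N' * u with hv
  have hsq : (-1 : ℝ) ^ N' * (-1 : ℝ) ^ N' = 1 := by
    rw [← pow_add, ← two_mul, pow_mul]; norm_num
  have hueq : u = (-1 : ℝ) ^ N' * v := by
    rw [hv, ← mul_assoc, hsq, one_mul]
  have hvpos : 0 < v := lt_of_lt_of_le (by positivity) hUlow
  have hgoal : (-1 : ℝ) ^ (N' + 1) *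
      (a * u + b * (Polynomial.Chebyshev.U ℝ (((N' + 1 : ℕ) : ℤ) - 2)).eval x - b
        + b * (Polynomial.Chebyshev.T ℝ ((N' + 1 : ℕ) : ℤ)).eval x)
      = (-1 : ℝ) ^ (N' + 1) * ((a + b * x) * u - b) := by
    linear_combination ((-1 : ℝ) ^ (N' + 1) * b) * hsum
  rw [hgoal]
  have hexp : (-1 : ℝ) ^ (N' + 1) * ((a + b * x) * u - b)
      = v * (-a - b * x) - (-1 : ℝ) ^ (N' + 1) * b := by
    rw [pow_succ, hueq]
    linear_combination (-(a + b * x) * v) * hsq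
  rw [hexp]
  have hfac : b * (3 / 4) < -a - b * x := by
    nlinarith [mul_lt_mul_of_pos_left hx hbpos]
  have hpos2 : (0 : ℝ) < -a - b * x := lt_trans (by positivity) hfac
  rcases Nat.even_or_odd (N' + 1) with he | ho
  · have h1 : (-1 : ℝ) ^ (N' + 1) = 1 := he.neg_one_pow
    rw [h1, one_mul]
    have hN2 : (2 : ℝ) ≤ v := by
      have hN1 : 1 ≤ N' := by
        rcases Nat.eq_zero_or_pos N' with h0 | h0
        · exfalso; rw [h0] at he; norm_num at he
        · exact h0
      have : (2 : ℝ) ≤ (N' : ℝ) + 1 := by exact_mod_cast Nat.succ_le_succ hN1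
      linarith [hUlow]
    have h6 : 2 * (-a - b * x) ≤ v * (-a - b * x) :=
      mul_le_mul_of_nonneg_right hN2 hpos2.le
    linarith
  · have h1 : (-1 : ℝ) ^ (N' + 1) = -1 := ho.neg_one_pow
    rw [h1]
    have := mul_pos hvpos hpos2
    linarith
end

section
/- For every natural number N ≥ 1 and real t > 0, the expression (e^{2Nt} − 1)(e^{2t} − 2r e^t + 1) − 2(−1)^N e^{Nt}(e^{2t} − 1) is strictly positive, where r = I_{N+1}(1)/I_N(1). -/
open Real Polynomial Polynomial.Chebyshev Finset

private noncomputable def bf (n m : ℕ) : ℝ :=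
  (1 / (m.factorial * (m + n).factorial)) * (1/2 : ℝ) ^ (2*m+n)

private lemma bf_pos (n m : ℕ) : 0 < bf n m := by unfold bf; positivity

private lemma bf_summable (n : ℕ) : Summable (bf n) := by
  refine Summable.of_nonneg_of_le (fun m => (bf_pos n m).le) ?_
    (summable_geometric_of_lt_one (r := (1:ℝ)/4) (by norm_num) (by norm_num))
  intro m
  unfold bf
  have h1 : (1:ℝ) / (m.factorial * (m + n).factorial) ≤ 1 := by
    rw [div_le_one (by positivity)]
    have h : (1:ℝ) ≤ m.factorial := by exact_mod_cast m.factorial_pos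
    have h' : (1:ℝ) ≤ (m+n).factorial := by exact_mod_cast (m+n).factorial_pos
    nlinarith
  have h2 : ((1:ℝ)/2) ^ (2*m+n) ≤ ((1:ℝ)/4) ^ m := by
    calc ((1:ℝ)/2) ^ (2*m+n) ≤ ((1:ℝ)/2) ^ (2*m) :=
          pow_le_pow_of_le_one (by norm_num) (by norm_num) (by omega)
      _ = ((1:ℝ)/4) ^ m := by rw [pow_mul]; norm_num
  calc (1 / (m.factorial * (m + n).factorial) : ℝ) * (1/2 : ℝ) ^ (2*m+n)
      ≤ 1 * ((1:ℝ)/4) ^ m := mul_le_mul h1 h2 (by positivity) (by norm_num)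
    _ = ((1:ℝ)/4) ^ m := by ring

private lemma bf_tsum_pos (n : ℕ) : 0 < ∑' m, bf n m :=
  Summable.tsum_pos (bf_summable n) (fun m => (bf_pos n m).le) 0 (bf_pos n 0)

private lemma bf_step (n : ℕ) (hn : 1 ≤ n) (m : ℕ) : bf (n+1) m ≤ (1/4) * bf n m := by
  have e1 : (2*m+(n+1)) = (2*m+n) + 1 := by omega
  have e2 : (m + (n+1)).factorial = (m+n+1) * (m+n).factorial := by
    rw [show m + (n+1) = (m+n)+1 by omega, Nat.factorial_succ]
  have hf : (0:ℝ) < m.factorial := by positivity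
  have hg : (0:ℝ) < (m+n).factorial := by positivity
  have key : bf (n+1) m = bf n m * (1/2) * ((m+n+1 : ℕ):ℝ)⁻¹ := by
    unfold bf; rw [e1, e2, pow_succ]; push_cast
    field_simp
  rw [key]
  have h2 : (2:ℝ) ≤ ((m+n+1 : ℕ):ℝ) := by exact_mod_cast (by omega : 2 ≤ m+n+1)
  have hinv : ((m+n+1 : ℕ):ℝ)⁻¹ ≤ 1/2 := by
    rw [show (1:ℝ)/2 = (2:ℝ)⁻¹ by norm_num]
    exact inv_anti₀ (by norm_num) h2
  nlinarith [bf_pos n m, hinv]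

private lemma besselI_nat (n : ℕ) : besselI (n : ℝ) 1 = ∑' m, bf n m := by
  unfold besselI bf
  congr 1
  funext m
  have h1 : (m : ℝ) + (n : ℝ) + 1 = ((m + n : ℕ) : ℝ) + 1 := by push_cast; ring
  have h2 : Real.Gamma ((m : ℝ) + n + 1) = ((m + n).factorial : ℝ) := by
    rw [h1, Real.Gamma_nat_eq_factorial]
  have h3 : ((1:ℝ)/2) ^ (2 * (m : ℝ) + n) = (1/2 : ℝ) ^ (2*m+n : ℕ) := by
    rw [show (2 * (m : ℝ) + n) = ((2*m+n : ℕ) : ℝ) by push_cast; ring, Real.rpow_natCast]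
  rw [h2]
  norm_num [h3]

theorem exp_combination_positive (N : ℕ) (hN : 1 ≤ N) (t : ℝ) (ht : 0 < t)
    (r : ℝ) (hr : r = besselI ((N : ℝ) + 1) 1 / besselI (N : ℝ) 1) :
    0 < (Real.exp (2 * N * t) - 1) *
        (Real.exp (2 * t) - 2 * r * Real.exp t + 1) -
      2 * (-1 : ℝ) ^ N * Real.exp (N * t) * (Real.exp (2 * t) - 1) := by
  -- bound r ≤ 1/2
  have hBn : besselI (N : ℝ) 1 = ∑' m, bf N m := besselI_nat N
  have hBn1 : besselI ((N : ℝ) + 1) 1 = ∑' m, bf (N+1) m := by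
    rw [show ((N : ℝ) + 1) = ((N+1 : ℕ) : ℝ) by push_cast; ring]
    exact besselI_nat (N+1)
  have hpos : 0 < ∑' m, bf N m := bf_tsum_pos N
  have hle : (∑' m, bf (N+1) m) ≤ (1/4) * ∑' m, bf N m := by
    calc (∑' m, bf (N+1) m) ≤ ∑' m, (1/4) * bf N m :=
          Summable.tsum_le_tsum (bf_step N hN) (bf_summable (N+1)) ((bf_summable N).mul_left _)
      _ = (1/4) * ∑' m, bf N m := tsum_mul_left
  have hr2 : r ≤ 1/2 := by
    rw [hr, hBn, hBn1, div_le_iff₀ hpos]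
    nlinarith
  clear hr hBn hBn1 hpos hle
  -- set up x, y
  set x := Real.exp t with hxdef
  have hx : 1 < x := by
    rw [hxdef]; exact Real.one_lt_exp_iff.mpr ht
  have hE1 : Real.exp (2 * N * t) = x ^ (2*N) := by
    rw [show (2 * (N:ℝ) * t) = ((2*N : ℕ) : ℝ) * t by push_cast; ring, Real.exp_nat_mul]
  have hE2 : Real.exp ((N:ℝ) * t) = x ^ N := by
    rw [show ((N:ℝ) * t) = ((N : ℕ) : ℝ) * t by push_cast; ring, Real.exp_nat_mul]
  have hE3 : Real.exp (2 * t) = x ^ 2 := by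
    rw [show (2 * t : ℝ) = ((2 : ℕ) : ℝ) * t by push_cast; ring, Real.exp_nat_mul]
  rw [hE1, hE2, hE3]
  set y := x ^ N with hydef
  have hy2 : x ^ (2*N) = y^2 := by rw [hydef, ← pow_mul, Nat.mul_comm]
  rw [hy2]
  have hxy : x ≤ y := by
    rw [hydef]
    calc x = x ^ 1 := (pow_one x).symm
      _ ≤ x ^ N := pow_le_pow_right₀ hx.le hN
  have ha : 0 < x^2 - 2*r*x + 1 := by nlinarith
  rcases Nat.even_or_odd N with hNe | hNo
  · -- even case
    rw [hNe.neg_one_pow]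
    have hN2 : 2 ≤ N := by
      rcases hNe with ⟨k, hk⟩; omega
    have hxy2 : x^2 ≤ y := by
      rw [hydef]; exact pow_le_pow_right₀ hx.le hN2
    have key : (y^2 - 1) * (x^2 - 2*r*x + 1) - 2 * 1 * y * (x^2 - 1)
        = (y - x^2) * ((x^2 - 2*r*x + 1) * (y + x^2) - 2*(x^2 - 1))
          + (x^2 - 1) * (x^4 + 1 - 2*r*x*(x^2+1)) := by ring
    have hb1 : 0 ≤ (y - x^2) * ((x^2 - 2*r*x + 1) * (y + x^2) - 2*(x^2 - 1)) := by
      apply mul_nonneg (by linarith)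
      nlinarith [mul_nonneg ha.le (sub_nonneg.mpr hxy2), mul_pos (sub_pos.mpr hx) (pow_pos (lt_trans one_pos hx) 3)]
    have hx0 : (0:ℝ) < x := lt_trans one_pos hx
    have hb2 : 0 < (x^2 - 1) * (x^4 + 1 - 2*r*x*(x^2+1)) := by
      have c0 : 0 < x^2 - 1 := by nlinarith
      have c1 : 2*r*x*(x^2+1) ≤ x*(x^2+1) := by nlinarith [mul_pos hx0 (show (0:ℝ) < x^2+1 by positivity)]
      have c2 : x*(x^2+1) < x^4+1 := by nlinarith [mul_pos (sub_pos.mpr hx) (show (0:ℝ) < x^3-1 by nlinarith [pow_pos hx0 3])]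
      exact mul_pos c0 (by linarith)
    linarith [key, hb1, hb2]
  · -- odd case
    rw [hNo.neg_one_pow]
    have h1 : 0 < (y^2 - 1) * (x^2 - 2*r*x + 1) := by
      apply mul_pos _ ha
      nlinarith
    nlinarith [mul_pos (show (0:ℝ) < y by nlinarith) (show (0:ℝ) < x^2 - 1 by nlinarith)]
end
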